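/- Every bounded semilinear language is recognized by a Parikh automaton. That is, if L ⊆ Σ* has a socle w₁, …, wₙ such that the iteration set Iter_{(w₁,…,wₙ)}(L) is semilinear, then there exists a Parikh automaton (A, C) with L(A, C) = L. -/

import Mathlib

open scoped Classical

noncomputable section

/-! ### Basic word and language notions -/

/-- Number of occurrences of `b` in the list `l`. -/
def countOcc {β : Type} (l : List β) (b : β) : ℕ :=
  (l.filter fun s => decide (s = b)).length

/-- `wpow w k` is the word `w` concatenated with itself `k` times. -/
def wpow {β : Type} (w : List β) : ℕ → List β
  | 0 => []
  | k + 1 => w ++ wpow w k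

/-- The word `w₁^{k₁} ⋯ wₙ^{kₙ}`. -/
def socProd {β : Type} {n : ℕ} (w : Fin n → List β) (k : Fin n → ℕ) : List β :=
  (List.ofFn fun i => wpow (w i) (k i)).flatten

/-- `w₁, …, wₙ` is a socle of `L`: the `wᵢ` are nonempty and `L ⊆ w₁* ⋯ wₙ*`. -/
def IsSocle {β : Type} {n : ℕ} (L : Set (List β)) (w : Fin n → List β) : Prop :=
  (∀ i, w i ≠ []) ∧ ∀ x ∈ L, ∃ k : Fin n → ℕ, x = socProd w k

/-- A language is bounded if it has a socle. -/
def BoundedLang {β : Type} (L : Set (List β)) : Prop :=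
  ∃ (n : ℕ) (w : Fin n → List β), 0 < n ∧ IsSocle L w

/-- The iteration set of `L` w.r.t. the socle `w`. -/
def IterSet {β : Type} {n : ℕ} (L : Set (List β)) (w : Fin n → List β) :
    Set (Fin n → ℕ) :=
  {k | socProd w k ∈ L}

/-- Concatenation of two languages. -/
def catLang {β : Type} (X Y : Set (List β)) : Set (List β) :=
  {w | ∃ x ∈ X, ∃ y ∈ Y, w = x ++ y}

/-- The language `z* = {z^k | k ∈ ℕ}` of powers of a single word. -/
def starWord {β : Type} (z : List β) : Set (List β) :=
  {w | ∃ k : ℕ, w = wpow z k}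

/-- Kleene star of a language. -/
def starLang {β : Type} (K : Set (List β)) : Set (List β) :=
  {w | ∃ l : List (List β), (∀ u ∈ l, u ∈ K) ∧ w = l.flatten}

/-! ### Semilinear sets -/

/-- `C ⊆ ℕ^ι` is linear: `C = c + P*` for a finite `P`. -/
def IsLinearSetN {ι : Type} (C : Set (ι → ℕ)) : Prop :=
  ∃ (c : ι → ℕ) (P : Set (ι → ℕ)), P.Finite ∧
    C = {x | ∃ p ∈ AddSubmonoid.closure P, x = c + p}

/-- `C ⊆ ℕ^ι` is semilinear: a finite union of linear sets. -/
def IsSemilinearSetN {ι : Type} (C : Set (ι → ℕ)) : Prop :=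
  ∃ S : Set (Set (ι → ℕ)), S.Finite ∧ (∀ D ∈ S, IsLinearSetN D) ∧ C = ⋃₀ S

/-- `L` is a bounded semilinear language: it has a socle whose iteration set is
semilinear. -/
def InBSL {β : Type} (L : Set (List β)) : Prop :=
  ∃ (n : ℕ) (w : Fin n → List β), 0 < n ∧ IsSocle L w ∧ IsSemilinearSetN (IterSet L w)

/-! ### Finite automata, paths, runs -/

/-- A (nondeterministic) finite automaton with a single initial state, a set of
final states and a finite set of transitions. -/
structure FinAut (α : Type) where
  σ : Type
  [finσ : Fintype σ]
  init : σ
  accept : Set σ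
  δ : Set (σ × α × σ)
  finδ : δ.Finite

namespace FinAut

variable {α : Type}

/-- The type of transitions of `A`. -/
def Trans (A : FinAut α) : Type := {t : A.σ × α × A.σ // t ∈ A.δ}

def src {A : FinAut α} (t : A.Trans) : A.σ := t.1.1
def lbl {A : FinAut α} (t : A.Trans) : α := t.1.2.1
def tgt {A : FinAut α} (t : A.Trans) : A.σ := t.1.2.2

/-- `A.Steps q π r` holds when `π` is a path from state `q` to state `r`. -/
inductive Steps (A : FinAut α) : A.σ → List A.Trans → A.σ → Prop
  | nil (q : A.σ) : Steps A q [] q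
  | cons {q r : A.σ} {t : A.Trans} {π : List A.Trans} :
      src t = q → Steps A (tgt t) π r → Steps A q (t :: π) r

/-- The set of accepting paths of `A`, as a language over the transition set. -/
def Run (A : FinAut α) : Set (List A.Trans) :=
  {π | ∃ f ∈ A.accept, A.Steps A.init π f}

/-- The language of `A`: labels of accepting paths. -/
def lang (A : FinAut α) : Set (List α) :=
  {w | ∃ π ∈ A.Run, w = π.map lbl}

/-- `A` is deterministic. -/
def Deterministic (A : FinAut α) : Prop :=
  ∀ ⦃p : A.σ⦄ ⦃a : α⦄ ⦃q q' : A.σ⦄, (p, a, q) ∈ A.δ → (p, a, q') ∈ A.δ → q = q'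

/-- The Parikh image of a path: how many times each transition occurs. -/
def pathCount {A : FinAut α} (π : List A.Trans) : A.Trans → ℕ :=
  fun t => countOcc π t

/-- `A` is flat: it consists of a spine of states `q 0, …, q n` (`q 0` initial,
`q n` final, exactly one transition from `q i` to `q (i+1)` given by the label
`sl i`), together with, for at most one pair `lo k ≤ hi k` each, a back-path of
fresh states from `q (hi k)` to `q (lo k)`; the endpoints of distinct
back-paths are not strictly inside one another (no nested loops). -/
def Flat (A : FinAut α) : Prop :=
  ∃ (n : ℕ) (q : Fin (n + 1) → A.σ) (sl : Fin n → α) (m : ℕ)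
    (lo hi : Fin m → Fin (n + 1)) (fresh : Fin m → List A.σ) (bl : Fin m → List α),
    Function.Injective q ∧
    A.init = q 0 ∧
    A.accept = {q (Fin.last n)} ∧
    (∀ k, lo k ≤ hi k) ∧
    (∀ k k', k ≠ k' → (lo k, hi k) ≠ (lo k', hi k')) ∧
    (∀ k k', k ≠ k' →
      ¬(lo k < lo k' ∧ lo k' < hi k) ∧ ¬(lo k < hi k' ∧ hi k' < hi k)) ∧
    (∀ k, (fresh k).Nodup) ∧
    (∀ k i, q i ∉ fresh k) ∧
    (∀ k k', k ≠ k' → ∀ s ∈ fresh k, s ∉ fresh k') ∧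
    (∀ s : A.σ, (∃ i, s = q i) ∨ ∃ k, s ∈ fresh k) ∧
    (∀ k, (bl k).length = (fresh k).length + 1) ∧
    A.δ = {t | (∃ i : Fin n, t = (q i.castSucc, sl i, q i.succ)) ∨
        (∃ (k : Fin m) (j : ℕ) (s s' : A.σ) (a : α),
          (q (hi k) :: (fresh k ++ [q (lo k)]))[j]? = some s ∧
          (bl k)[j]? = some a ∧
          (q (hi k) :: (fresh k ++ [q (lo k)]))[j + 1]? = some s' ∧
          t = (s, a, s'))}

end FinAut

/-! ### ε-automata -/

/-- The language of an ε-automaton (transitions labelled by `Option α`, where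
`none` stands for ε): labels of accepting paths, erasing ε. -/
def epsLang {α : Type} (A : FinAut (Option α)) : Set (List α) :=
  {w | ∃ π ∈ A.Run, w = π.filterMap FinAut.lbl}

/-! ### Constrained automata -/

/-- The language of the constrained automaton `(A, C)`. -/
def CALang {α : Type} (A : FinAut α) (C : Set (A.Trans → ℕ)) : Set (List α) :=
  {w | ∃ π ∈ A.Run, FinAut.pathCount π ∈ C ∧ w = π.map FinAut.lbl}

/-- The language of the ε-constrained automaton `(A, C)`. -/
def EpsCALang {α : Type} (A : FinAut (Option α)) (C : Set (A.Trans → ℕ)) :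
    Set (List α) :=
  {w | ∃ π ∈ A.Run, FinAut.pathCount π ∈ C ∧ w = π.filterMap FinAut.lbl}

def RecByCA {α : Type} (L : Set (List α)) : Prop :=
  ∃ (A : FinAut α) (C : Set (A.Trans → ℕ)), IsSemilinearSetN C ∧ CALang A C = L

def RecByDetCA {α : Type} (L : Set (List α)) : Prop :=
  ∃ (A : FinAut α) (C : Set (A.Trans → ℕ)),
    A.Deterministic ∧ IsSemilinearSetN C ∧ CALang A C = L

def RecByEpsCA {α : Type} (L : Set (List α)) : Prop :=
  ∃ (A : FinAut (Option α)) (C : Set (A.Trans → ℕ)),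
    IsSemilinearSetN C ∧ EpsCALang A C = L

/-- `L` is a finite union of languages of flat deterministic constrained
automata. -/
def FlatDetCAUnion {α : Type} (L : Set (List α)) : Prop :=
  ∃ (m : ℕ) (A : Fin m → FinAut α) (C : ∀ b, Set ((A b).Trans → ℕ)),
    (∀ b, (A b).Flat) ∧ (∀ b, (A b).Deterministic) ∧
    (∀ b, IsSemilinearSetN (C b)) ∧ L = ⋃ b, CALang (A b) (C b)

/-! ### Parikh automata -/

/-- Projection of a word over `Σ × ℕ^d` on `Σ`. -/
def PsiW {α : Type} {d : ℕ} (ω : List (α × (Fin d → ℕ))) : List α :=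
  ω.map Prod.fst

/-- Extended Parikh image: the sum of the vector components. -/
def PhiTilde {α : Type} {d : ℕ} (ω : List (α × (Fin d → ℕ))) : Fin d → ℕ :=
  (ω.map Prod.snd).sum

/-- The language of the Parikh automaton `(A, C)`.  (Note that the set `D` of
vectors appearing on transitions of `A` is automatically finite, since the
transition set of `A` is finite.) -/
def PALang {α : Type} {d : ℕ} (A : FinAut (α × (Fin d → ℕ))) (C : Set (Fin d → ℕ)) :
    Set (List α) :=
  {w | ∃ ω ∈ A.lang, PhiTilde ω ∈ C ∧ w = PsiW ω}

/-- Determinism for Parikh automata: at most one pair `(v, q')` for each state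
`q` and letter `a`. -/
def PADet {α : Type} {d : ℕ} (A : FinAut (α × (Fin d → ℕ))) : Prop :=
  ∀ ⦃p : A.σ⦄ ⦃a : α⦄ ⦃v v' : Fin d → ℕ⦄ ⦃q q' : A.σ⦄,
    (p, (a, v), q) ∈ A.δ → (p, (a, v'), q') ∈ A.δ → v = v' ∧ q = q'

def RecByPA {α : Type} (L : Set (List α)) : Prop :=
  ∃ (d : ℕ) (A : FinAut (α × (Fin d → ℕ))) (C : Set (Fin d → ℕ)),
    IsSemilinearSetN C ∧ PALang A C = L

def RecByDetPA {α : Type} (L : Set (List α)) : Prop :=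
  ∃ (d : ℕ) (A : FinAut (α × (Fin d → ℕ))) (C : Set (Fin d → ℕ)),
    PADet A ∧ IsSemilinearSetN C ∧ PALang A C = L

/-! ### Affine Parikh automata -/

/-- Apply the affine functions `x ↦ M t * x + v t` of the transitions of a path,
in order (first transition first). -/
def pathApply {α : Type} {d : ℕ} (A : FinAut α) (M : A.Trans → Matrix (Fin d) (Fin d) ℕ)
    (v : A.Trans → Fin d → ℕ) : List A.Trans → (Fin d → ℕ) → (Fin d → ℕ)
  | [], x => x
  | t :: π, x => pathApply A M v π ((M t).mulVec x + v t)

/-- The language of the affine Parikh automaton `(A, U, C)`, where the affine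
function attached to transition `t` is `x ↦ M t * x + v t`. -/
def APALang {α : Type} {d : ℕ} (A : FinAut α) (M : A.Trans → Matrix (Fin d) (Fin d) ℕ)
    (v : A.Trans → Fin d → ℕ) (C : Set (Fin d → ℕ)) : Set (List α) :=
  {w | ∃ π ∈ A.Run, pathApply A M v π 0 ∈ C ∧ w = π.map FinAut.lbl}

/-- The monoid of the APA: the multiplicative matrix monoid generated by the
matrices of the transitions. -/
def APAMonoid {α : Type} {d : ℕ} (A : FinAut α) (M : A.Trans → Matrix (Fin d) (Fin d) ℕ) :
    Set (Matrix (Fin d) (Fin d) ℕ) :=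
  (Submonoid.closure (Set.range M) : Submonoid (Matrix (Fin d) (Fin d) ℕ))

/-! ### Semilinear regular expressions -/

/-- The language `y₀ x₁* y₁ ⋯ xₙ* yₙ` of a branch of an SLRE. -/
def branchLang {β : Type} {n : ℕ} (y : Fin (n + 1) → List β) (x : Fin n → List β) :
    Set (List β) :=
  {w | ∃ k : Fin n → ℕ,
    w = y 0 ++ (List.ofFn fun i : Fin n => wpow (x i) (k i) ++ y i.succ).flatten}

end

noncomputable section BSLAux
open scoped Classical

namespace BSLAux

variable {α : Type} {n : ℕ}

theorem wpow_succ {β : Type} (u : List β) (c : ℕ) : wpow u (c + 1) = u ++ wpow u c := rfl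

theorem wpow_map {β γ : Type} (f : β → γ) (u : List β) :
    ∀ c, (wpow u c).map f = wpow (u.map f) c
  | 0 => rfl
  | c + 1 => by simp [wpow, wpow_map f u c]

/-- letter `j` of block `i`, decorated. -/
def ltr (w : Fin n → List α) (i : Fin n) (j : Fin (w i).length) : α × (Fin n → ℕ) :=
  ((w i).get j, if (j : ℕ) = 0 then Pi.single i 1 else 0)

/-- block `i`, decorated. -/
def dec (w : Fin n → List α) (i : Fin n) : List (α × (Fin n → ℕ)) :=
  List.ofFn (ltr w i)

/-- the canonical decorated word for the tuple `k`. -/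
def enc (w : Fin n → List α) (k : Fin n → ℕ) : List (α × (Fin n → ℕ)) :=
  (List.ofFn fun i => wpow (dec w i) (k i)).flatten

theorem dec_length (w : Fin n → List α) (i : Fin n) : (dec w i).length = (w i).length := by
  simp [dec]

theorem dec_map_fst (w : Fin n → List α) (i : Fin n) : (dec w i).map Prod.fst = w i := by
  simp [dec, List.map_ofFn, ltr]
  exact List.ofFn_get (w i)

theorem psiW_enc (w : Fin n → List α) (k : Fin n → ℕ) :
    PsiW (enc w k) = socProd w k := by
  unfold PsiW enc socProd
  rw [List.map_flatten, List.map_ofFn]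
  have : (List.map Prod.fst ∘ fun i => wpow (dec w i) (k i))
      = fun i => wpow (w i) (k i) := by
    funext i
    simp only [Function.comp]
    rw [wpow_map, dec_map_fst]
  rw [this]

theorem phiTilde_append {d : ℕ} (x y : List (α × (Fin d → ℕ))) :
    PhiTilde (x ++ y) = PhiTilde x + PhiTilde y := by
  unfold PhiTilde; rw [List.map_append, List.sum_append]

theorem phiTilde_dec (w : Fin n → List α) (hne : ∀ i, w i ≠ []) (i : Fin n) :
    PhiTilde (dec w i) = Pi.single i 1 := by
  unfold PhiTilde dec
  rw [List.map_ofFn, List.sum_ofFn]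
  have hpos : 0 < (w i).length := List.length_pos_iff.mpr (hne i)
  rw [show Finset.univ = insert (⟨0, hpos⟩ : Fin (w i).length) (Finset.univ.erase ⟨0, hpos⟩) from
    (Finset.insert_erase (Finset.mem_univ _)).symm]
  rw [Finset.sum_insert (Finset.notMem_erase _ _)]
  have h2 : ∀ j ∈ Finset.univ.erase (⟨0, hpos⟩ : Fin (w i).length),
      (Prod.snd ∘ ltr w i) j = 0 := by
    intro j hj
    have : (j : ℕ) ≠ 0 := by
      intro h
      exact (Finset.mem_erase.mp hj).1 (Fin.ext h)
    simp [ltr, this]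
  rw [Finset.sum_eq_zero h2]
  simp [ltr]

theorem phiTilde_wpow {d : ℕ} (u : List (α × (Fin d → ℕ))) :
    ∀ c, PhiTilde (wpow u c) = c • PhiTilde u
  | 0 => by simp [wpow, PhiTilde]
  | c + 1 => by
      rw [wpow_succ, phiTilde_append, phiTilde_wpow u c, add_smul, one_smul, add_comm]

theorem phiTilde_enc (w : Fin n → List α) (hne : ∀ i, w i ≠ []) (k : Fin n → ℕ) :
    PhiTilde (enc w k) = k := by
  unfold PhiTilde enc
  rw [List.map_flatten, List.sum_flatten, List.map_ofFn, List.map_ofFn, List.sum_ofFn]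
  have : ∀ i : Fin n, ((List.map Prod.snd ∘ fun i => wpow (dec w i) (k i)) i).sum
      = Pi.single i (k i) := by
    intro i
    have h1 := phiTilde_wpow (d := n) (dec w i) (k i)
    have h2 := phiTilde_dec w hne i
    unfold PhiTilde at h1 h2
    simp only [Function.comp]
    rw [h1, h2]
    ext x
    by_cases hx : x = i <;> simp [hx, Pi.single_apply]
  simp only [Function.comp] at this ⊢
  rw [Finset.sum_congr rfl (fun i _ => this i)]
  exact Finset.univ_sum_single k

theorem flat_split {β : Type} : ∀ {m : ℕ} (g : Fin m → List β) (i : Fin m),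
    (∀ j, j < i → g j = []) →
    (List.ofFn g).flatten = g i ++ (List.ofFn (Function.update g i [])).flatten := by
  intro m
  induction m with
  | zero => intro g i; exact i.elim0
  | succ m ih =>
    intro g i h
    rw [List.ofFn_succ, List.ofFn_succ]
    revert h
    refine Fin.cases ?_ ?_ i
    · intro _
      simp only [List.flatten_cons, Function.update_self, List.nil_append]
      have : (fun i : Fin m => Function.update g 0 [] i.succ) = fun i => g i.succ := by
        funext j
        rw [Function.update_of_ne (Fin.succ_ne_zero j)]
      rw [this]
    · intro i h
      have h0 : g 0 = [] := h 0 (Fin.succ_pos i)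
      have hs : ∀ j, j < i → (fun x : Fin m => g x.succ) j = [] := fun j hj =>
        h j.succ (by rwa [Fin.succ_lt_succ_iff])
      have key := ih (fun x => g x.succ) i hs
      simp only [List.flatten_cons, h0, List.nil_append]
      rw [key]
      have hupd0 : Function.update g i.succ [] 0 = [] := by
        rw [Function.update_of_ne (Fin.succ_ne_zero i).symm, h0]
      have hupds : (fun j : Fin m => Function.update g i.succ [] j.succ)
          = Function.update (fun x : Fin m => g x.succ) i [] := by
        funext j
        by_cases hji : j = i
        · subst hji; simp [Function.update_self]
        · rw [Function.update_of_ne (fun hc => hji (Fin.succ_injective _ hc)),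
            Function.update_of_ne hji]
      rw [hupd0, hupds, List.nil_append]

variable {α : Type} {n : ℕ}

theorem encB (w : Fin n → List α) (i : Fin n) (k : Fin n → ℕ)
    (h : ∀ j, j < i → k j = 0) :
    enc w k = wpow (dec w i) (k i) ++ enc w (Function.update k i 0) := by
  unfold enc
  rw [flat_split (fun j => wpow (dec w j) (k j)) i
    (fun j hj => by show wpow (dec w j) (k j) = []; rw [h j hj]; rfl)]
  have : Function.update (fun j => wpow (dec w j) (k j)) i []
      = fun j => wpow (dec w j) (Function.update k i 0 j) := by
    funext j
    by_cases hji : j = i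
    · subst hji; simp [Function.update_self]; rfl
    · rw [Function.update_of_ne hji, Function.update_of_ne hji]
  rw [this]

theorem enc_zero (w : Fin n → List α) : enc w 0 = [] := by
  unfold enc
  rw [List.flatten_eq_nil_iff]
  intro l hl
  rcases List.mem_ofFn.mp hl with ⟨i, rfl⟩
  rfl

theorem enc_bump (w : Fin n → List α) (i : Fin n) (k : Fin n → ℕ)
    (h : ∀ j, j < i → k j = 0) :
    enc w (Function.update k i (k i + 1)) = dec w i ++ enc w k := by
  have h' : ∀ j, j < i → Function.update k i (k i + 1) j = 0 := by
    intro j hj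
    rw [Function.update_of_ne (Fin.ne_of_lt hj)]
    exact h j hj
  rw [encB w i _ h', encB w i k h]
  rw [Function.update_self]
  have : Function.update (Function.update k i (k i + 1)) i 0 = Function.update k i 0 := by
    rw [Function.update_idem]
  rw [this, wpow_succ, List.append_assoc]

/-- State type: `none` = initial; `some ⟨i,j⟩` = just read letter `j` of a copy of block `i`. -/
def St (w : Fin n → List α) : Type := Option ((i : Fin n) × Fin (w i).length)

instance (w : Fin n → List α) : Fintype (St w) := by unfold St; infer_instance

def pos0 (w : Fin n → List α) (hne : ∀ i, w i ≠ []) (i : Fin n) : Fin (w i).length :=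
  ⟨0, List.length_pos_iff.mpr (hne i)⟩

def lastPos (w : Fin n → List α) (hne : ∀ i, w i ≠ []) (i : Fin n) : Fin (w i).length :=
  ⟨(w i).length - 1, by have := List.length_pos_iff.mpr (hne i); omega⟩

/-- `q` can enter block `i`. -/
def Entry (w : Fin n → List α) (hne : ∀ i, w i ≠ []) (q : St w) (i : Fin n) : Prop :=
  q = none ∨ ∃ i₀ : Fin n, i₀ ≤ i ∧ q = some ⟨i₀, lastPos w hne i₀⟩

def aut (w : Fin n → List α) (hne : ∀ i, w i ≠ []) : FinAut (α × (Fin n → ℕ)) where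
  σ := St w
  init := none
  accept := {q | q = none ∨ ∃ i : Fin n, q = some ⟨i, lastPos w hne i⟩}
  δ := {t | (∃ (i : Fin n) (j j' : Fin (w i).length), (j' : ℕ) = (j : ℕ) + 1 ∧
              t = (some ⟨i, j⟩, ltr w i j', some ⟨i, j'⟩)) ∨
            (∃ (i : Fin n) (q : St w), Entry w hne q i ∧
              t = (q, ltr w i (pos0 w hne i), some ⟨i, pos0 w hne i⟩))}
  finδ := by
    apply Set.Finite.subset (Set.finite_range
      (fun p : ((i : Fin n) × Fin (w i).length) × St w =>
        ((p.2, ltr w p.1.1 p.1.2, some p.1) : St w × (α × (Fin n → ℕ)) × St w)))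
    rintro t (⟨i, j, j', hj, rfl⟩ | ⟨i, q, hq, rfl⟩)
    · exact ⟨⟨⟨i, j'⟩, some ⟨i, j⟩⟩, rfl⟩
    · exact ⟨⟨⟨i, pos0 w hne i⟩, q⟩, rfl⟩

theorem steps_append {β : Type} (A : FinAut β) {q r s : A.σ} {π₁ π₂ : List A.Trans}
    (h1 : A.Steps q π₁ r) (h2 : A.Steps r π₂ s) : A.Steps q (π₁ ++ π₂) s := by
  induction h1 with
  | nil => exact h2
  | cons hsrc _ ih => exact FinAut.Steps.cons hsrc (ih h2)

variable (w : Fin n → List α) (hne : ∀ i, w i ≠ [])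

theorem read_rest : ∀ (c : ℕ) (i : Fin n) (j : Fin (w i).length),
    (j : ℕ) + 1 + c = (w i).length →
    ∃ π : List (aut w hne).Trans,
      (aut w hne).Steps (some ⟨i, j⟩) π (some ⟨i, lastPos w hne i⟩) ∧
      π.map FinAut.lbl = (dec w i).drop ((j : ℕ) + 1) := by
  intro c
  induction c with
  | zero =>
    intro i j hj
    have hjl : j = lastPos w hne i := Fin.ext (by simp [lastPos]; omega)
    refine ⟨[], hjl ▸ FinAut.Steps.nil _, ?_⟩
    rw [List.drop_eq_nil_of_le (by rw [dec_length]; omega)]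
    rfl
  | succ c ih =>
    intro i j hj
    have hj1 : (j : ℕ) + 1 < (w i).length := by omega
    set j' : Fin (w i).length := ⟨(j : ℕ) + 1, hj1⟩ with hj'
    have ht : ((some ⟨i, j⟩, ltr w i j', some ⟨i, j'⟩) :
        (aut w hne).σ × (α × (Fin n → ℕ)) × (aut w hne).σ) ∈ (aut w hne).δ :=
      Or.inl ⟨i, j, j', rfl, rfl⟩
    obtain ⟨π', hst, hlb⟩ := ih i j' (by simp [hj']; omega)
    refine ⟨⟨_, ht⟩ :: π', FinAut.Steps.cons rfl hst, ?_⟩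
    have hlen : (j : ℕ) + 1 < (dec w i).length := by rw [dec_length]; omega
    erw [List.map_cons]; rw [hlb, List.drop_eq_getElem_cons hlen]
    congr 1
    · show ltr w i j' = (dec w i)[(j : ℕ) + 1]
      simp only [dec]
      rw [List.getElem_ofFn]

theorem read_copy (i : Fin n) (q : St w) (hq : Entry w hne q i) :
    ∃ π : List (aut w hne).Trans,
      (aut w hne).Steps q π (some ⟨i, lastPos w hne i⟩) ∧
      π.map FinAut.lbl = dec w i := by
  have ht : ((q, ltr w i (pos0 w hne i), some ⟨i, pos0 w hne i⟩) :
      (aut w hne).σ × (α × (Fin n → ℕ)) × (aut w hne).σ) ∈ (aut w hne).δ :=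
    Or.inr ⟨i, q, hq, rfl⟩
  have hpos : 0 < (w i).length := List.length_pos_iff.mpr (hne i)
  obtain ⟨π', hst, hlb⟩ := read_rest w hne ((w i).length - 1) i (pos0 w hne i)
    (by simp [pos0]; omega)
  refine ⟨⟨_, ht⟩ :: π', FinAut.Steps.cons rfl hst, ?_⟩
  have hlen : 0 < (dec w i).length := by rw [dec_length]; omega
  erw [List.map_cons]; rw [hlb]
  conv_rhs => rw [← List.drop_zero (l := dec w i), List.drop_eq_getElem_cons hlen]
  congr 1
  · show ltr w i (pos0 w hne i) = (dec w i)[0]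
    simp only [dec]
    rw [List.getElem_ofFn]
    rfl

theorem read_copies : ∀ (c : ℕ) (i : Fin n) (q : St w), Entry w hne q i →
    ∃ π : List (aut w hne).Trans,
      (aut w hne).Steps q π (some ⟨i, lastPos w hne i⟩) ∧
      π.map FinAut.lbl = wpow (dec w i) (c + 1) := by
  intro c
  induction c with
  | zero =>
    intro i q hq
    obtain ⟨π, hst, hlb⟩ := read_copy w hne i q hq
    exact ⟨π, hst, by rw [hlb, wpow_succ]; simp [wpow]⟩
  | succ c ih =>
    intro i q hq
    obtain ⟨π₁, hst1, hlb1⟩ := read_copy w hne i q hq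
    obtain ⟨π₂, hst2, hlb2⟩ := ih i (some ⟨i, lastPos w hne i⟩) (Or.inr ⟨i, le_refl i, rfl⟩)
    refine ⟨π₁ ++ π₂, steps_append _ hst1 hst2, ?_⟩
    rw [List.map_append, hlb1, hlb2]
    rfl

theorem fwd : ∀ (m : ℕ), m ≤ n → ∀ (k : Fin n → ℕ) (q : St w),
    (∀ j : Fin n, (j : ℕ) < n - m → k j = 0) →
    (q = none ∨ ∃ i₀ : Fin n, (∀ j, k j ≠ 0 → i₀ ≤ j) ∧ q = some ⟨i₀, lastPos w hne i₀⟩) →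
    ∃ (π : List (aut w hne).Trans) (f : St w), f ∈ (aut w hne).accept ∧
      (aut w hne).Steps q π f ∧ π.map FinAut.lbl = enc w k := by
  intro m
  induction m with
  | zero =>
    intro hm k q hz hq
    have hk : k = 0 := funext fun j => hz j (by omega)
    have hacc : q ∈ (aut w hne).accept := by
      rcases hq with rfl | ⟨i₀, _, rfl⟩
      · exact Or.inl rfl
      · exact Or.inr ⟨i₀, rfl⟩
    exact ⟨[], q, hacc, FinAut.Steps.nil _, by rw [hk, enc_zero]; rfl⟩
  | succ m ih =>
    intro hm k q hz hq
    set i : Fin n := ⟨n - (m + 1), by omega⟩ with hi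
    rcases Nat.eq_zero_or_pos (k i) with hc | hc
    · refine ih (by omega) k q (fun j hj => ?_) hq
      rcases Nat.lt_or_ge (j : ℕ) (n - (m + 1)) with h | h
      · exact hz j h
      · have : j = i := Fin.ext (by simp [hi]; omega)
        rw [this]; exact hc
    · have he : Entry w hne q i := by
        rcases hq with rfl | ⟨i₀, hi₀, rfl⟩
        · exact Or.inl rfl
        · exact Or.inr ⟨i₀, hi₀ i (by omega), rfl⟩
      obtain ⟨c, hc'⟩ : ∃ c, k i = c + 1 := ⟨k i - 1, by omega⟩
      obtain ⟨π₁, hst1, hlb1⟩ := read_copies w hne c i q he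
      have hz' : ∀ j : Fin n, (j : ℕ) < n - m → Function.update k i 0 j = 0 := by
        intro j hj
        by_cases hji : j = i
        · rw [hji, Function.update_self]
        · rw [Function.update_of_ne hji]
          refine hz j ?_
          have : (j : ℕ) ≠ n - (m + 1) := fun h => hji (Fin.ext (by simp [hi, h]))
          omega
      have hq' : (some ⟨i, lastPos w hne i⟩ : St w) = none ∨
          ∃ i₀ : Fin n, (∀ j, Function.update k i 0 j ≠ 0 → i₀ ≤ j) ∧
            (some ⟨i, lastPos w hne i⟩ : St w) = some ⟨i₀, lastPos w hne i₀⟩ := by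
        refine Or.inr ⟨i, fun j hj => ?_, rfl⟩
        by_cases hji : j = i
        · rw [hji]
        · rw [Function.update_of_ne hji] at hj
          have : ¬ ((j : ℕ) < n - (m + 1)) := fun h => hj (hz j h)
          show (i : ℕ) ≤ (j : ℕ)
          simp only [hi]; omega
      obtain ⟨π₂, f, hfacc, hst2, hlb2⟩ := ih (by omega) (Function.update k i 0)
        (some ⟨i, lastPos w hne i⟩) hz' hq'
      refine ⟨π₁ ++ π₂, f, hfacc, steps_append _ hst1 hst2, ?_⟩
      rw [List.map_append, hlb1, hlb2, ← hc',
        ← encB w i k (fun j hj => hz j (by simpa [hi, Fin.lt_def] using hj))]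

theorem enc_mem_lang (k : Fin n → ℕ) : enc w k ∈ (aut w hne).lang := by
  obtain ⟨π, f, hfacc, hst, hlb⟩ := fwd w hne n (le_refl n) k none
    (fun j hj => absurd hj (by omega)) (Or.inl rfl)
  exact ⟨π, ⟨f, hfacc, hst⟩, hlb.symm⟩

theorem bwd : ∀ (π : List (aut w hne).Trans) (q f : St w),
    (aut w hne).Steps q π f → f ∈ (aut w hne).accept →
    (q = none → ∃ k, π.map FinAut.lbl = enc w k) ∧
    (∀ (i : Fin n) (j : Fin (w i).length), q = some ⟨i, j⟩ →
      ∃ k, (∀ j' : Fin n, j' < i → k j' = 0) ∧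
        π.map FinAut.lbl = (dec w i).drop ((j : ℕ) + 1) ++ enc w k) := by
  intro π
  induction π with
  | nil =>
    intro q f hst hacc
    have hqf : q = f := by
      have key : ∀ (a b : (aut w hne).σ), (aut w hne).Steps a [] b → a = b := by
        intro a b h; cases h; rfl
      exact key q f hst
    subst hqf
    constructor
    · intro _; exact ⟨0, (enc_zero w).symm⟩
    · intro i j hq
      subst hq
      rcases hacc with h | ⟨i₂, h⟩
      · exact absurd h (by simp)
      · have hs : (⟨i, j⟩ : (i : Fin n) × Fin (w i).length) = ⟨i₂, lastPos w hne i₂⟩ :=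
          Option.some.inj h
        obtain ⟨rfl, hj⟩ := Sigma.mk.inj_iff.mp hs
        have hj' : j = lastPos w hne i := eq_of_heq hj
        refine ⟨0, fun _ _ => rfl, ?_⟩
        rw [List.drop_eq_nil_of_le (by rw [dec_length]; simp [hj', lastPos]; omega),
          enc_zero]
        rfl
  | cons t π' ih =>
    intro q f hst hacc
    have hst' : FinAut.src t = q ∧ (aut w hne).Steps (FinAut.tgt t) π' f := by
      have key : ∀ (a b : (aut w hne).σ), (aut w hne).Steps a (t :: π') b →
          FinAut.src t = a ∧ (aut w hne).Steps (FinAut.tgt t) π' b := by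
        intro a b h
        cases h with
        | cons h1 h2 => exact ⟨h1, h2⟩
      exact key q f hst
    obtain ⟨hsrc, hsteps⟩ := hst'
    rcases t.2 with ⟨i, j, j', hj, ht⟩ | ⟨i, q₀, hq₀, ht⟩
    · -- inner transition
      have hqe : q = some ⟨i, j⟩ := by rw [← hsrc]; show t.1.1 = _; rw [ht]
      have htgt : FinAut.tgt t = some ⟨i, j'⟩ := by show t.1.2.2 = _; rw [ht]
      rw [htgt] at hsteps
      obtain ⟨k, hzk, hlb⟩ := (ih (some ⟨i, j'⟩) f hsteps hacc).2 i j' rfl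
      have hlbl : FinAut.lbl t = ltr w i j' := by show t.1.2.1 = _; rw [ht]
      have hlen : (j : ℕ) + 1 < (dec w i).length := by rw [dec_length]; omega
      have hmain : (t :: π').map FinAut.lbl = (dec w i).drop ((j : ℕ) + 1) ++ enc w k := by
        rw [List.map_cons, hlbl, hlb, List.drop_eq_getElem_cons hlen]
        rw [List.cons_append]
        congr 2
        · show ltr w i j' = (dec w i)[(j : ℕ) + 1]
          simp only [dec]
          rw [List.getElem_ofFn]
          congr 1
          exact Fin.ext (by simp [hj])
        · rw [hj]
      constructor
      · intro h; rw [h] at hqe; exact absurd hqe (by simp)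
      · intro i₂ j₂ hq2
        rw [hqe] at hq2
        have hs : (⟨i, j⟩ : (i : Fin n) × Fin (w i).length) = ⟨i₂, j₂⟩ :=
          Option.some.inj hq2
        obtain ⟨rfl, hjh⟩ := Sigma.mk.inj_iff.mp hs
        have : j = j₂ := eq_of_heq hjh
        subst this
        exact ⟨k, hzk, hmain⟩
    · -- entry transition
      have hqe : q = q₀ := by rw [← hsrc]; show t.1.1 = _; rw [ht]
      have htgt : FinAut.tgt t = some ⟨i, pos0 w hne i⟩ := by show t.1.2.2 = _; rw [ht]
      rw [htgt] at hsteps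
      obtain ⟨k, hzk, hlb⟩ := (ih (some ⟨i, pos0 w hne i⟩) f hsteps hacc).2 i (pos0 w hne i) rfl
      have hlbl : FinAut.lbl t = ltr w i (pos0 w hne i) := by show t.1.2.1 = _; rw [ht]
      have hlen : 0 < (dec w i).length := by
        rw [dec_length]; exact List.length_pos_iff.mpr (hne i)
      have hlb1 : List.map FinAut.lbl π' = (dec w i).drop 1 ++ enc w k := hlb
      have hdec : dec w i = ltr w i (pos0 w hne i) :: (dec w i).drop 1 := by
        conv_lhs => rw [← List.drop_zero (l := dec w i), List.drop_eq_getElem_cons hlen]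
        congr 1
        show (dec w i)[0] = ltr w i (pos0 w hne i)
        simp only [dec]
        rw [List.getElem_ofFn]
        rfl
      have hmain : (t :: π').map FinAut.lbl = enc w (Function.update k i (k i + 1)) := by
        rw [enc_bump w i k hzk, List.map_cons, hlbl, hlb1]
        conv_rhs => rw [hdec]
        rw [List.cons_append]
      have hzk' : ∀ j' : Fin n, j' < i → Function.update k i (k i + 1) j' = 0 := by
        intro j' hj'
        rw [Function.update_of_ne (Fin.ne_of_lt hj')]
        exact hzk j' hj'
      constructor
      · intro _; exact ⟨_, hmain⟩
      · intro i₂ j₂ hq2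
        rw [hqe] at hq2
        rcases hq₀ with rfl | ⟨i₀, hi₀, rfl⟩
        · exact absurd hq2 (by simp)
        · have hs : (⟨i₀, lastPos w hne i₀⟩ : (i : Fin n) × Fin (w i).length) = ⟨i₂, j₂⟩ :=
            Option.some.inj hq2
          obtain ⟨rfl, hjh⟩ := Sigma.mk.inj_iff.mp hs
          have hj2 : lastPos w hne i₀ = j₂ := eq_of_heq hjh
          subst hj2
          refine ⟨Function.update k i (k i + 1), fun j' hj' => hzk' j' (lt_of_lt_of_le hj' hi₀), ?_⟩
          rw [List.drop_eq_nil_of_le (by rw [dec_length]; simp [lastPos]; omega)]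
          rw [List.nil_append]
          exact hmain

theorem lang_eq (x : List (α × (Fin n → ℕ))) :
    x ∈ (aut w hne).lang ↔ ∃ k, x = enc w k := by
  constructor
  · rintro ⟨π, ⟨f, hfacc, hst⟩, rfl⟩
    obtain ⟨k, hk⟩ := (bwd w hne π none f hst hfacc).1 rfl
    exact ⟨k, hk⟩
  · rintro ⟨k, rfl⟩
    exact enc_mem_lang w hne k

end BSLAux
end BSLAux

/-- Every bounded semilinear language is recognized by a
Parikh automaton. -/
theorem bsl_recByPA {α : Type} [Fintype α] (L : Set (List α))
    {n : ℕ} (hn : 0 < n) (w : Fin n → List α) (hw : IsSocle L w)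
    (hsl : IsSemilinearSetN (IterSet L w)) :
    RecByPA L := by
  obtain ⟨hne, hsoc⟩ := hw
  refine ⟨n, BSLAux.aut w hne, IterSet L w, hsl, ?_⟩
  ext x
  constructor
  · rintro ⟨ω, hω, hC, rfl⟩
    obtain ⟨k, rfl⟩ := (BSLAux.lang_eq w hne ω).mp hω
    rw [BSLAux.phiTilde_enc w hne k] at hC
    rw [BSLAux.psiW_enc w k]
    exact hC
  · intro hx
    obtain ⟨k, hk⟩ := hsoc x hx
    have hkI : k ∈ IterSet L w := by show socProd w k ∈ L; rw [← hk]; exact hx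
    exact ⟨BSLAux.enc w k, BSLAux.enc_mem_lang w hne k,
      by rw [BSLAux.phiTilde_enc w hne k]; exact hkI,
      by rw [BSLAux.psiW_enc w k]; exact hk⟩
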